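/- (Forward invariance of boxes.) Let n ≥ 1 and let A : [0,∞) × ℝⁿ → ℝ^{n×n} be continuous, such that for every (t,y), A(t,y)_{ij} ≥ 0 for all i ≠ j and Σ_j A(t,y)_{ij} = 0 for every row i. Let a ≤ b be real numbers and let x : [0,∞) → ℝⁿ be differentiable with x′(t) = A(t, x(t))·x(t) for all t ≥ 0. If a ≤ x_i(0) ≤ b for every i, then a ≤ x_i(t) ≤ b for every i and every t ≥ 0; in other words, the box [a,b]ⁿ is forward invariant. -/

import Mathlib

open Filter Set Topology

lemma dini_aux {ι : Type*} [Fintype ι] (ne : (Finset.univ : Finset ι).Nonempty)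
    (g : ι → ℝ → ℝ) (g' : ι → ℝ) (t r : ℝ)
    (hg : ∀ i, HasDerivAt (g i) (g' i) t)
    (hr : ∀ i, g i t = Finset.univ.sup' ne (fun j => g j t) → g' i < r) :
    ∃ᶠ z in 𝓝[>] t, (z - t)⁻¹ *
      ((Finset.univ.sup' ne fun j => g j z) - (Finset.univ.sup' ne fun j => g j t)) < r := by
  set f : ℝ → ℝ := fun z => Finset.univ.sup' ne fun j => g j z with hf
  by_contra hcon
  rw [Filter.not_frequently] at hcon
  have hcon' : ∀ᶠ z in 𝓝[>] t, r ≤ (z - t)⁻¹ * (f z - f t) := by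
    filter_upwards [hcon] with z hz; linarith [not_lt.mp hz]
  -- pigeonhole: some index achieves the sup frequently
  have hex : ∀ᶠ z in 𝓝[>] t, ∃ i, f z = g i z ∧ r ≤ (z - t)⁻¹ * (f z - f t) := by
    filter_upwards [hcon'] with z hz
    obtain ⟨i, -, hi⟩ := Finset.exists_mem_eq_sup' ne (fun j => g j z)
    exact ⟨i, hi, hz⟩
  have : ∃ i, ∃ᶠ z in 𝓝[>] t, f z = g i z ∧ r ≤ (z - t)⁻¹ * (f z - f t) := by
    by_contra h
    push_neg at h
    have := (Filter.eventually_all.2 h).and hex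
    obtain ⟨z, hz1, i, hi1, hi2⟩ := this.exists
    exact absurd hi2 (not_le.mpr (hz1 i hi1))
  obtain ⟨i, hi⟩ := this
  set l : Filter ℝ := 𝓝[>] t ⊓ 𝓟 {z | f z = g i z ∧ r ≤ (z - t)⁻¹ * (f z - f t)} with hl
  haveI : l.NeBot := Filter.frequently_iff_neBot.mp hi
  have hll : l ≤ 𝓝[≠] t :=
    le_trans inf_le_left (nhdsWithin_mono _ (fun z hz => ne_of_gt hz))
  have hmem : ∀ᶠ z in l, f z = g i z ∧ r ≤ (z - t)⁻¹ * (f z - f t) :=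
    eventually_inf_principal.mpr (Filter.Eventually.of_forall fun z hz => hz)
  -- i is active: g i t = f t
  have hact : g i t = f t := by
    have h1 : Tendsto (fun z => g i z) l (𝓝 (g i t)) :=
      ((hg i).continuousAt.tendsto).comp (hll.trans nhdsWithin_le_nhds)
    have h2 : Tendsto f l (𝓝 (g i t)) := by
      refine h1.congr' ?_
      filter_upwards [hmem] with z hz using hz.1.symm
    refine le_antisymm (Finset.le_sup' (fun j => g j t) (Finset.mem_univ i)) ?_
    refine Finset.sup'_le _ _ fun j _ => ?_
    have h3 : Tendsto (fun z => g j z) l (𝓝 (g j t)) :=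
      ((hg j).continuousAt.tendsto).comp (hll.trans nhdsWithin_le_nhds)
    exact le_of_tendsto_of_tendsto h3 h2
      (Filter.Eventually.of_forall fun z => Finset.le_sup' (fun k => g k z) (Finset.mem_univ j))
  -- slope contradiction
  have hslope : Tendsto (slope (g i) t) l (𝓝 (g' i)) :=
    (hasDerivAt_iff_tendsto_slope.mp (hg i)).mono_left hll
  have : r ≤ g' i := by
    refine ge_of_tendsto hslope ?_
    filter_upwards [hmem] with z hz
    have : slope (g i) t z = (z - t)⁻¹ * (g i z - g i t) := by
      simp [slope_def_field, div_eq_inv_mul]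
    rw [this, ← hz.1, hact]
    exact hz.2
  exact absurd (hr i hact) (not_lt.mpr this)


lemma mv_le_aux {n : ℕ} (M : Matrix (Fin n) (Fin n) ℝ) (v : Fin n → ℝ) (i : Fin n)
    (hM : ∀ j, j ≠ i → 0 ≤ M i j) (hrow : ∑ j, M i j = 0) (hv : ∀ j, v j ≤ v i) :
    M.mulVec v i ≤ 0 := by
  have h1 : M.mulVec v i = ∑ j, M i j * (v j - v i) := by
    simp only [Matrix.mulVec, dotProduct, mul_sub, Finset.sum_sub_distrib,
      ← Finset.sum_mul, hrow, zero_mul, sub_zero]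
  rw [h1]
  apply Finset.sum_nonpos
  intro j _
  rcases eq_or_ne j i with h | h
  · simp [h]
  · exact mul_nonpos_of_nonneg_of_nonpos (hM j h) (by linarith [hv j])

/-- forward invariance of boxes: if `A(t,y)` is Metzler with zero row
sums and continuous, then every box `[a,b]ⁿ` is forward invariant for
`x' = A(t,x(t))·x(t)`. -/
theorem stmt16 {n : ℕ} (hn : 1 ≤ n) (A : ℝ → (Fin n → ℝ) → Matrix (Fin n) (Fin n) ℝ)
    (hcont : ContinuousOn (fun p : ℝ × (Fin n → ℝ) => A p.1 p.2) (Set.Ici 0 ×ˢ Set.univ))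
    (hmetzler : ∀ t, 0 ≤ t → ∀ y, ∀ i j, i ≠ j → 0 ≤ A t y i j)
    (hrow : ∀ t, 0 ≤ t → ∀ y i, ∑ j, A t y i j = 0)
    (a b : ℝ) (hab : a ≤ b)
    (x : ℝ → Fin n → ℝ)
    (hx : ∀ t, 0 ≤ t → HasDerivAt x ((A t (x t)).mulVec (x t)) t)
    (h0 : ∀ i, a ≤ x 0 i ∧ x 0 i ≤ b) :
    ∀ t, 0 ≤ t → ∀ i, a ≤ x t i ∧ x t i ≤ b := by
  intro T hT
  -- component derivatives
  have hxc : ∀ s, 0 ≤ s → ∀ i, HasDerivAt (fun z => x z i) ((A s (x s)).mulVec (x s) i) s :=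
    fun s hs i => hasDerivAt_pi.mp (hx s hs) i
  set ι := Option (Fin n × Bool) with hι
  set g : ι → ℝ → ℝ := fun o => Option.rec (fun _ => (0 : ℝ))
    (fun p z => Bool.rec (a - x z p.1) (x z p.1 - b) p.2) o with hg
  have ne : (Finset.univ : Finset ι).Nonempty := Finset.univ_nonempty
  set f : ℝ → ℝ := fun z => Finset.univ.sup' ne fun o => g o z with hf
  have hgle : ∀ o z, g o z ≤ f z := fun o z => Finset.le_sup' (fun o => g o z) (Finset.mem_univ o)
  -- derivatives of g at s ≥ 0
  set g' : ℝ → ι → ℝ := fun s o => Option.rec (0 : ℝ)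
    (fun p => Bool.rec (-(A s (x s)).mulVec (x s) p.1) ((A s (x s)).mulVec (x s) p.1) p.2) o
    with hg'
  have hgd : ∀ s, 0 ≤ s → ∀ o, HasDerivAt (g o) (g' s o) s := by
    intro s hs o
    match o with
    | none => exact hasDerivAt_const s 0
    | some (i, true) => exact (hxc s hs i).sub_const b
    | some (i, false) => exact (hxc s hs i).const_sub a
  -- continuity of f on [0, T]
  have hfc : ContinuousOn f (Icc 0 T) := by
    intro z hz
    exact ContinuousWithinAt.finset_sup'_apply ne fun o _ =>
      ((hgd z hz.1 o).continuousAt).continuousWithinAt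
  -- f 0 ≤ 0
  have hf0 : f 0 ≤ 0 := by
    apply Finset.sup'_le
    intro o _
    match o with
    | none => exact le_refl 0
    | some (i, true) => simp only [hg]; linarith [(h0 i).2]
    | some (i, false) => simp only [hg]; linarith [(h0 i).1]
  -- Gronwall
  have key : ∀ s ∈ Icc (0 : ℝ) T, f s ≤ gronwallBound 0 0 0 (s - 0) := by
    apply le_gronwallBound_of_liminf_deriv_right_le (f' := fun _ => 0) hfc ?_ hf0 ?_
    · intro s hs r hr
      apply dini_aux ne g (g' s) s r (hgd s hs.1)
      intro o hact
      match o with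
      | none => exact hr
      | some (i, true) =>
        have hle : ∀ j, x s j ≤ x s i := by
          intro j
          have h2 : g (some (j, true)) s ≤ g (some (i, true)) s := by
            rw [hact]
            exact Finset.le_sup' (fun o => g o s) (Finset.mem_univ (some (j, true)))
          simp only [hg] at h2
          linarith
        have := mv_le_aux (A s (x s)) (x s) i
          (fun j hj => hmetzler s hs.1 (x s) i j (Ne.symm hj)) (hrow s hs.1 (x s) i) hle
        calc g' s (some (i, true)) = (A s (x s)).mulVec (x s) i := rfl
          _ ≤ 0 := this
          _ < r := hr
      | some (i, false) =>
        have hle : ∀ j, (-x s) j ≤ (-x s) i := by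
          intro j
          have h2 : g (some (j, false)) s ≤ g (some (i, false)) s := by
            rw [hact]
            exact Finset.le_sup' (fun o => g o s) (Finset.mem_univ (some (j, false)))
          simp only [hg] at h2
          simp only [Pi.neg_apply]
          linarith
        have := mv_le_aux (A s (x s)) (-(x s)) i
          (fun j hj => hmetzler s hs.1 (x s) i j (Ne.symm hj)) (hrow s hs.1 (x s) i) hle
        rw [Matrix.mulVec_neg] at this
        calc g' s (some (i, false)) = -(A s (x s)).mulVec (x s) i := rfl
          _ ≤ 0 := by simpa using this
          _ < r := hr
    · intro s _
      simp
  have hfT : f T ≤ 0 := by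
    have := key T ⟨hT, le_refl T⟩
    rwa [gronwallBound_ε0_δ0] at this
  intro i
  constructor
  · have := (hgle (some (i, false)) T).trans hfT
    simp only [hg] at this; linarith
  · have := (hgle (some (i, true)) T).trans hfT
    simp only [hg] at this; linarith
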